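/- Let d ≥ 5 and m ≥ d be integers, let g ≥ 1 be a real number, and consider the MBSP instance given by the zipper DAG Z(d,m) with P = 2 processors, cache capacity r = d+2, communication cost g, and synchronization cost L = 0. Let OPT be the minimum synchronous cost over all valid schedules, and let OPT' be the minimum synchronous cost over those valid schedules in which every COMPUTE transition of a node v_i (i ∈ [m]) occurs on processor 1 and every COMPUTE transition of a node u_i (i ∈ [m]) occurs on processor 2. Then OPT' ≥ (d/10)·OPT. -/

import Mathlib

namespace MBSP

/-- A transition (pebbling move) of a single processor. -/
inductive Op (ν : Type) where
  | load : ν → Op ν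
  | save : ν → Op ν
  | compute : ν → Op ν
  | delete : ν → Op ν
deriving DecidableEq

/-- An MBSP instance: a DAG with compute weights `ω`, memory weights `μ`,
`P` processors, cache capacity `r`, communication cost `g` and synchronization cost `L`. -/
structure Inst (ν : Type) where
  edge : ν → ν → Prop
  ω : ν → ℝ
  μ : ν → ℝ
  P : ℕ
  r : ℝ
  g : ℝ
  L : ℝ

variable {ν : Type} [DecidableEq ν]

def isSource (I : Inst ν) (v : ν) : Prop := ¬ ∃ u, I.edge u v

def isSink (I : Inst ν) (v : ν) : Prop := ¬ ∃ u, I.edge v u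

def Acyclic (I : Inst ν) : Prop := ∀ v, ¬ Relation.TransGen I.edge v v

def opCost (I : Inst ν) : Op ν → ℝ
  | .load v => I.μ v * I.g
  | .save v => I.μ v * I.g
  | .compute v => I.ω v
  | .delete _ => 0

def applyOp (R B : Finset ν) : Op ν → Finset ν × Finset ν
  | .load v => (insert v R, B)
  | .save v => (R, insert v B)
  | .compute v => (insert v R, B)
  | .delete v => (R.erase v, B)

def opOK (I : Inst ν) (R B : Finset ν) : Op ν → Prop
  | .load v => v ∈ B
  | .save v => v ∈ R
  | .compute v => (∃ u, I.edge u v) ∧ ∀ u, I.edge u v → u ∈ R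
  | .delete _ => True

/-- The memory bound for a cache content `R`. -/
def memOK (I : Inst ν) (R : Finset ν) : Prop := ∑ v ∈ R, I.μ v ≤ I.r

/-- Run a sequence of transitions of one processor on a pair (cache, slow memory). -/
def run (R B : Finset ν) : List (Op ν) → Finset ν × Finset ν
  | [] => (R, B)
  | op :: rest => run (applyOp R B op).1 (applyOp R B op).2 rest

/-- Validity of a sequence of transitions of one processor: every precondition holds
when the transition is applied and the memory bound holds throughout. -/
def seqValid (I : Inst ν) (R B : Finset ν) : List (Op ν) → Prop
  | [] => True
  | op :: rest => opOK I R B op ∧ memOK I (applyOp R B op).1 ∧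
      seqValid I (applyOp R B op).1 (applyOp R B op).2 rest

/-- A superstep: for every processor, a compute phase (computes and deletes),
then a save phase, a delete phase and a load phase. -/
structure Superstep (ν : Type) (P : ℕ) where
  comp : Fin P → List (Op ν)
  save : Fin P → List ν
  del : Fin P → List ν
  load : Fin P → List ν

structure Config (ν : Type) (P : ℕ) where
  R : Fin P → Finset ν
  B : Finset ν

abbrev Schedule (ν : Type) (P : ℕ) := List (Superstep ν P)

variable {P : ℕ}

def compOnly (l : List (Op ν)) : Prop :=
  ∀ op ∈ l, (∃ v, op = Op.compute v) ∨ (∃ v, op = Op.delete v)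

def afterComp (c : Config ν P) (S : Superstep ν P) (p : Fin P) : Finset ν :=
  (run (c.R p) c.B (S.comp p)).1

/-- The shared slow memory after the save phases of all processors. -/
def newB (c : Config ν P) (S : Superstep ν P) : Finset ν :=
  c.B ∪ Finset.univ.biUnion (fun p => (S.save p).toFinset)

def afterDel (c : Config ν P) (S : Superstep ν P) (p : Fin P) : Finset ν :=
  (S.del p).foldl Finset.erase (afterComp c S p)

def afterLoad (c : Config ν P) (S : Superstep ν P) (p : Fin P) : Finset ν :=
  afterDel c S p ∪ (S.load p).toFinset

/-- The configuration reached after executing a superstep. -/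
def stepConfig (c : Config ν P) (S : Superstep ν P) : Config ν P :=
  ⟨fun p => afterLoad c S p, newB c S⟩

/-- Validity of a superstep at a configuration. -/
def ssValid (I : Inst ν) (c : Config ν I.P) (S : Superstep ν I.P) : Prop :=
  (∀ p, compOnly (S.comp p)) ∧
  (∀ p, seqValid I (c.R p) c.B (S.comp p)) ∧
  (∀ p, ∀ v ∈ S.save p, v ∈ afterComp c S p) ∧
  (∀ p, ∀ v ∈ S.load p, v ∈ newB c S) ∧
  (∀ p, memOK I (afterLoad c S p))

def runSched (c : Config ν P) : Schedule ν P → Config ν P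
  | [] => c
  | S :: rest => runSched (stepConfig c S) rest

def schedValidFrom (I : Inst ν) (c : Config ν I.P) : Schedule ν I.P → Prop
  | [] => True
  | S :: rest => ssValid I c S ∧ schedValidFrom I (stepConfig c S) rest

/-- `B` is exactly the set of sources of the DAG. -/
def initB (I : Inst ν) (B : Finset ν) : Prop := ∀ v, v ∈ B ↔ isSource I v

/-- A valid MBSP schedule: starts with empty caches and the sources in slow memory,
every transition is legal and the memory bound holds throughout, and at the end
every sink is in slow memory. -/
def Valid (I : Inst ν) (sched : Schedule ν I.P) : Prop :=
  ∃ B0 : Finset ν, initB I B0 ∧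
    schedValidFrom I ⟨fun _ => ∅, B0⟩ sched ∧
    ∀ v, isSink I v → v ∈ (runSched (⟨fun _ => ∅, B0⟩ : Config ν I.P) sched).B

def listCost (I : Inst ν) (l : List (Op ν)) : ℝ := (l.map (opCost I)).sum

def ioCost (I : Inst ν) (l : List ν) : ℝ := (l.map (fun v => I.μ v * I.g)).sum

/-- The synchronous cost of a superstep. -/
noncomputable def ssCost (I : Inst ν) (S : Superstep ν I.P) : ℝ :=
  (⨆ p : Fin I.P, listCost I (S.comp p)) + (⨆ p : Fin I.P, ioCost I (S.save p)) +
    (⨆ p : Fin I.P, ioCost I (S.load p)) + I.L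

/-- The synchronous cost of a schedule. -/
noncomputable def syncCost (I : Inst ν) (sched : Schedule ν I.P) : ℝ :=
  (sched.map (ssCost I)).sum

/-- Finishing times of the saves in a save phase starting at time `t`. -/
def saveFinishes (I : Inst ν) : ℝ → List ν → List (ν × ℝ)
  | _, [] => []
  | t, v :: rest => (v, t + I.μ v * I.g) :: saveFinishes I (t + I.μ v * I.g) rest

def minSaveTime (entries : List (ν × ℝ)) (v : ν) : Option ℝ :=
  ((entries.filter (fun e => e.1 == v)).map Prod.snd).min?

/-- Finishing time of a load phase: each load waits for the value to be available
in slow memory (time `Γ v`). -/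
def loadFold (I : Inst ν) (Γ : ν → Option ℝ) : ℝ → List ν → ℝ
  | t, [] => t
  | t, v :: rest => loadFold I Γ (max t ((Γ v).getD 0) + I.μ v * I.g) rest

/-- One superstep of the asynchronous execution: updates the finishing time of
every processor and the availability times `Γ` of the values in slow memory. -/
def asyncSS (I : Inst ν) (S : Superstep ν I.P)
    (st : (Fin I.P → ℝ) × (ν → Option ℝ)) : (Fin I.P → ℝ) × (ν → Option ℝ) :=
  let t1 : Fin I.P → ℝ := fun p => st.1 p + listCost I (S.comp p)
  let entries : List (ν × ℝ) :=
    ((List.finRange I.P).map (fun p => saveFinishes I (t1 p) (S.save p))).flatten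
  let Γ' : ν → Option ℝ := fun v => (st.2 v).orElse (fun _ => minSaveTime entries v)
  let t2 : Fin I.P → ℝ := fun p => t1 p + ioCost I (S.save p)
  (fun p => loadFold I Γ' (t2 p) (S.load p), Γ')

def asyncRun (I : Inst ν) (st : (Fin I.P → ℝ) × (ν → Option ℝ)) :
    Schedule ν I.P → (Fin I.P → ℝ) × (ν → Option ℝ)
  | [] => st
  | S :: rest => asyncRun I (asyncSS I S st) rest

/-- The asynchronous cost (makespan) of a schedule. -/
noncomputable def asyncCost (I : Inst ν) (sched : Schedule ν I.P) : ℝ :=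
  ⨆ p : Fin I.P, (asyncRun I (fun _ => (0 : ℝ), fun _ => none) sched).1 p

end MBSP

namespace MBSP

/-- Nodes of the zipper DAG `Z(d,m)`: two groups `H₁`, `H₂` of `d` source nodes
each, and two chains `v_1,…,v_m` and `u_1,…,u_m` (index `i ∈ [m]` is `Fin`-value `i-1`). -/
inductive ZNode (d m : ℕ) where
  | h1 : Fin d → ZNode d m
  | h2 : Fin d → ZNode d m
  | v : Fin m → ZNode d m
  | u : Fin m → ZNode d m
deriving DecidableEq, Fintype

/-- Edges of the zipper DAG `Z(d,m)`. -/
def zEdge (d m : ℕ) : ZNode d m → ZNode d m → Prop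
  | .v i, .v j => (j : ℕ) = (i : ℕ) + 1
  | .u i, .u j => (j : ℕ) = (i : ℕ) + 1
  | .h1 _, .u i => Odd ((i : ℕ) + 1)
  | .h1 _, .v i => Even ((i : ℕ) + 1)
  | .h2 _, .v i => Odd ((i : ℕ) + 1)
  | .h2 _, .u i => Even ((i : ℕ) + 1)
  | _, _ => False

/-- The MBSP instance on the zipper DAG `Z(d,m)` with `P = 2` processors, cache
capacity `r`, communication cost `g` and synchronization cost `L`; all compute and
memory weights are `1`. -/
def zipper (d m : ℕ) (r g L : ℝ) : Inst (ZNode d m) where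
  edge := zEdge d m
  ω := fun _ => 1
  μ := fun _ => 1
  P := 2
  r := r
  g := g
  L := L

end MBSP


namespace MBSP
namespace ZAux

open Finset

variable {d m : ℕ}

attribute [reducible] zipper

noncomputable abbrev ZI (d m : ℕ) (g : ℝ) : Inst (ZNode d m) := zipper d m ((d:ℝ)+2) g 0

def H1f (d m : ℕ) : Finset (ZNode d m) := Finset.univ.image ZNode.h1
def H2f (d m : ℕ) : Finset (ZNode d m) := Finset.univ.image ZNode.h2

lemma mem_H1f {w : ZNode d m} : w ∈ H1f d m ↔ ∃ i, w = ZNode.h1 i := by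
  simp [H1f, eq_comm]

lemma mem_H2f {w : ZNode d m} : w ∈ H2f d m ↔ ∃ i, w = ZNode.h2 i := by
  simp [H2f, eq_comm]

lemma card_H1f : (H1f d m).card = d := by
  rw [H1f, Finset.card_image_of_injective _ (fun a b h => by cases h; rfl)]
  simp

lemma card_H2f : (H2f d m).card = d := by
  rw [H2f, Finset.card_image_of_injective _ (fun a b h => by cases h; rfl)]
  simp

lemma memOK_iff {g : ℝ} {R : Finset (ZNode d m)} :
    memOK (ZI d m g) R ↔ (R.card : ℝ) ≤ (d : ℝ) + 2 := by
  simp [memOK, zipper]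

lemma memOK_iff' {g : ℝ} {R : Finset (ZNode d m)} :
    memOK (ZI d m g) R ↔ R.card ≤ d + 2 := by
  rw [memOK_iff]
  constructor
  · intro h; exact_mod_cast h
  · intro h; exact_mod_cast h

/-- foldl erase equals sdiff. -/
lemma foldl_erase_eq {α : Type*} [DecidableEq α] (l : List α) (s : Finset α) :
    l.foldl Finset.erase s = s \ l.toFinset := by
  induction l generalizing s with
  | nil => simp
  | cons a t ih =>
    simp only [List.foldl_cons, ih, Finset.erase_eq, List.toFinset_cons]
    ext x; simp; tauto

lemma ioCost_eq {g : ℝ} (l : List (ZNode d m)) : ioCost (ZI d m g) l = l.length * g := by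
  induction l with
  | nil => simp [ioCost]
  | cons a t ih =>
    simp only [ioCost, List.map_cons, List.sum_cons] at ih ⊢
    rw [ih]; simp [zipper]; ring

lemma opCost_nonneg {g : ℝ} (hg : 0 ≤ g) (op : Op (ZNode d m)) : 0 ≤ opCost (ZI d m g) op := by
  cases op <;> simp [opCost, zipper, hg]

lemma listCost_nonneg {g : ℝ} (hg : 0 ≤ g) (l : List (Op (ZNode d m))) :
    0 ≤ listCost (ZI d m g) l := by
  induction l with
  | nil => simp [listCost]
  | cons a t ih =>
    simp only [listCost, List.map_cons, List.sum_cons] at ih ⊢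
    have := opCost_nonneg (d := d) (m := m) hg a
    linarith

lemma le_ciSup_fin2 (f : Fin 2 → ℝ) (p : Fin 2) : f p ≤ ⨆ q, f q :=
  le_ciSup (Set.Finite.bddAbove (Set.finite_range f)) p

def totload (sched : Schedule (ZNode d m) 2) : ℕ :=
  (sched.map (fun S => (S.load 0).length)).sum

lemma syncCost_ge_loads {g : ℝ} (hg : 0 ≤ g) (sched : Schedule (ZNode d m) 2) :
    (totload sched : ℝ) * g ≤ syncCost (ZI d m g) sched := by
  induction sched with
  | nil => simp [totload, syncCost]
  | cons S rest ih =>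
    have h1 : (0:ℝ) ≤ ⨆ p : Fin (ZI d m g).P, listCost (ZI d m g) (S.comp p) :=
      le_trans (listCost_nonneg hg (S.comp 0))
        (le_ciSup_fin2 (fun p => listCost (ZI d m g) (S.comp p)) 0)
    have h2 : (0:ℝ) ≤ ⨆ p : Fin (ZI d m g).P, ioCost (ZI d m g) (S.save p) := by
      refine le_trans ?_ (le_ciSup_fin2 (fun p => ioCost (ZI d m g) (S.save p)) 0)
      rw [ioCost_eq]; positivity
    have h3 : ((S.load 0).length : ℝ) * g ≤ ⨆ p : Fin (ZI d m g).P, ioCost (ZI d m g) (S.load p) := by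
      refine le_trans ?_ (le_ciSup_fin2 (fun p => ioCost (ZI d m g) (S.load p)) 0)
      rw [ioCost_eq]
    have hL : (ZI d m g).L = 0 := rfl
    simp only [syncCost, totload, List.map_cons, List.sum_cons, ssCost, hL] at ih ⊢
    push_cast at ih ⊢
    rw [add_mul]
    exact add_le_add (by linarith) ih

end ZAux
end MBSP

namespace MBSP
namespace ZAux

open Finset

variable {d m : ℕ}

def Hneed (d m K : ℕ) : Finset (ZNode d m) := if K % 2 = 0 then H2f d m else H1f d m

def KR (K : ℕ) (R : Finset (ZNode d m)) : Prop := ∀ i : Fin m, ZNode.v i ∈ R → (i : ℕ) < K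

lemma KR_mono {K K' : ℕ} (h : K ≤ K') {R : Finset (ZNode d m)} (hR : KR K R) : KR K' R :=
  fun i hi => lt_of_lt_of_le (hR i hi) h

lemma no_edge_to_h1 (w : ZNode d m) (a : Fin d) : ¬ zEdge d m w (ZNode.h1 a) := by
  cases w <;> simp [zEdge]

lemma no_edge_to_h2 (w : ZNode d m) (a : Fin d) : ¬ zEdge d m w (ZNode.h2 a) := by
  cases w <;> simp [zEdge]

lemma mem_Hneed_elim {K : ℕ} {w : ZNode d m} (h : w ∈ Hneed d m K) :
    (∃ a, w = ZNode.h1 a) ∨ (∃ a, w = ZNode.h2 a) := by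
  unfold Hneed at h
  split at h
  · exact Or.inr (mem_H2f.1 h)
  · exact Or.inl (mem_H1f.1 h)

lemma Hneed_card (K : ℕ) : (Hneed d m K).card = d := by
  unfold Hneed; split
  · exact card_H2f
  · exact card_H1f

lemma Hneed_succ_disjoint (K : ℕ) {w : ZNode d m}
    (h1 : w ∈ Hneed d m K) (h2 : w ∈ Hneed d m (K + 1)) : False := by
  unfold Hneed at h1 h2
  rcases Nat.mod_two_eq_zero_or_one K with h | h
  · rw [if_pos h] at h1
    rw [if_neg (by omega)] at h2
    rcases mem_H1f.1 h2 with ⟨a, rfl⟩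
    rcases mem_H2f.1 h1 with ⟨b, hb⟩
    simp at hb
  · rw [if_neg (by omega)] at h1
    rw [if_pos (by omega)] at h2
    rcases mem_H1f.1 h1 with ⟨a, rfl⟩
    rcases mem_H2f.1 h2 with ⟨b, hb⟩
    simp at hb

lemma v_not_mem_Hneed (K : ℕ) (i : Fin m) : ZNode.v i ∉ Hneed d m K := by
  intro h
  rcases mem_Hneed_elim h with ⟨a, ha⟩ | ⟨a, ha⟩ <;> simp at ha

lemma Hneed_subset_of_parents {K : ℕ} {i : Fin m} (hiK : (i : ℕ) = K)
    {R : Finset (ZNode d m)} (hpar : ∀ w, zEdge d m w (ZNode.v i) → w ∈ R) :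
    Hneed d m K ⊆ R := by
  intro w hw
  unfold Hneed at hw
  split at hw
  · rcases mem_H2f.1 hw with ⟨a, rfl⟩
    exact hpar _ (show Odd ((i : ℕ) + 1) by rw [Nat.odd_iff]; omega)
  · rcases mem_H1f.1 hw with ⟨a, rfl⟩
    exact hpar _ (show Even ((i : ℕ) + 1) by rw [Nat.even_iff]; omega)

lemma cap_one {g : ℝ} {R : Finset (ZNode d m)} {i : Fin m}
    (hmem : memOK (ZI d m g) (insert (ZNode.v i) R))
    (hH : Hneed d m (i : ℕ) ⊆ R) :
    ((insert (ZNode.v i) R) ∩ Hneed d m ((i : ℕ) + 1)).card ≤ 1 := by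
  set A := insert (ZNode.v i) R with hA
  set D := insert (ZNode.v i) (Hneed d m (i : ℕ)) with hD
  have hDA : D ⊆ A := insert_subset_insert _ hH
  have hdisj : Disjoint (A ∩ Hneed d m ((i : ℕ) + 1)) D := by
    rw [Finset.disjoint_left]
    intro w hw hwD
    have hw2 := (mem_inter.1 hw).2
    rcases mem_insert.1 hwD with rfl | hwH
    · exact v_not_mem_Hneed _ _ hw2
    · exact Hneed_succ_disjoint _ hwH hw2
  have hsub : (A ∩ Hneed d m ((i : ℕ) + 1)) ∪ D ⊆ A :=
    union_subset (inter_subset_left) hDA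
  have hDcard : D.card = d + 1 := by
    rw [hD, card_insert_of_notMem (v_not_mem_Hneed _ _), Hneed_card]
  have hAcard : A.card ≤ d + 2 := memOK_iff'.1 hmem
  have := card_le_card hsub
  rw [card_union_of_disjoint hdisj, hDcard] at this
  omega

lemma cap_succ {g : ℝ} {R : Finset (ZNode d m)} {i j : Fin m} (hij : (j : ℕ) + 1 = (i : ℕ))
    (hmem : memOK (ZI d m g) (insert (ZNode.v i) R))
    (hH : Hneed d m (i : ℕ) ⊆ R) (hj : ZNode.v j ∈ R) :
    ((insert (ZNode.v i) R) ∩ Hneed d m ((i : ℕ) + 1)).card = 0 := by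
  set A := insert (ZNode.v i) R with hA
  set D := insert (ZNode.v i) (insert (ZNode.v j) (Hneed d m (i : ℕ))) with hD
  have hDA : D ⊆ A := insert_subset_insert _ (insert_subset hj hH)
  have hinotin : ZNode.v i ∉ insert (ZNode.v j) (Hneed d m (i : ℕ)) := by
    intro hc
    rcases mem_insert.1 hc with hc | hc
    · have hc' : i = j := by injection hc
      rw [hc'] at hij; omega
    · exact v_not_mem_Hneed _ _ hc
  have hDcard : D.card = d + 2 := by
    rw [hD, card_insert_of_notMem hinotin,
      card_insert_of_notMem (v_not_mem_Hneed _ _), Hneed_card]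
  have hAcard : A.card ≤ d + 2 := memOK_iff'.1 hmem
  have hAD : D = A := Finset.eq_of_subset_of_card_le hDA (by omega)
  rw [Finset.card_eq_zero, Finset.eq_empty_iff_forall_notMem]
  intro w hw
  obtain ⟨hw1, hw2⟩ := mem_inter.1 hw
  rw [← hAD, hD] at hw1
  rcases mem_insert.1 hw1 with rfl | hw1
  · exact v_not_mem_Hneed _ _ hw2
  rcases mem_insert.1 hw1 with rfl | hw1
  · exact v_not_mem_Hneed _ _ hw2
  · exact Hneed_succ_disjoint _ hw1 hw2

lemma comp0 {g : ℝ} (c₀ : ℕ) (hc₀ : d + 1 ≤ c₀) :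
    ∀ (l : List (Op (ZNode d m))) (R B : Finset (ZNode d m)) (K : ℕ),
    compOnly l → seqValid (ZI d m g) R B l →
    (∀ i : Fin m, Op.compute (ZNode.u i) ∉ l) →
    KR K R → K * d + (R ∩ Hneed d m K).card ≤ c₀ →
    ∃ K', K ≤ K' ∧ KR K' (run R B l).1 ∧ (run R B l).2 = B ∧
      K' * d + ((run R B l).1 ∩ Hneed d m K').card ≤ c₀ := by
  intro l
  induction l with
  | nil => intro R B K _ _ _ hK hL; exact ⟨K, le_rfl, hK, rfl, hL⟩
  | cons op rest ih =>
    intro R B K hco hsv hu hK hL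
    have hco' : compOnly rest := fun o h => hco o (List.mem_cons_of_mem _ h)
    have hu' : ∀ i : Fin m, Op.compute (ZNode.u i) ∉ rest :=
      fun i h => hu i (List.mem_cons_of_mem _ h)
    obtain ⟨hok, hmem, hsv'⟩ := hsv
    rcases hco op (List.mem_cons_self) with ⟨w, rfl⟩ | ⟨w, rfl⟩
    · -- compute w
      cases w with
      | h1 a =>
        obtain ⟨u, hu2⟩ := hok.1
        exact absurd hu2 (no_edge_to_h1 u a)
      | h2 a =>
        obtain ⟨u, hu2⟩ := hok.1
        exact absurd hu2 (no_edge_to_h2 u a)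
      | u i => exact absurd (List.mem_cons_self) (hu i)
      | v i =>
        have hpar : ∀ w', zEdge d m w' (ZNode.v i) → w' ∈ R := hok.2
        simp only [run, applyOp] at *
        have hle : (i : ℕ) ≤ K := by
          by_cases h0 : (i : ℕ) = 0
          · omega
          · have hjlt : (i : ℕ) - 1 < m := by omega
            have hjR : ZNode.v (⟨(i : ℕ) - 1, hjlt⟩ : Fin m) ∈ R :=
              hpar _ (show ((i : ℕ) = ((i : ℕ) - 1) + 1) by omega)
            have := hK _ hjR
            simp at this
            omega
        by_cases hiK : (i : ℕ) < K
        · refine ih (insert (ZNode.v i) R) B K hco' hsv' hu' ?_ ?_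
          · intro j hj
            rcases mem_insert.1 hj with hj | hj
            · have : j = i := by injection hj
              rw [this]; exact hiK
            · exact hK j hj
          · rw [insert_inter_of_notMem (v_not_mem_Hneed _ _)]
            exact hL
        · have hiK' : (i : ℕ) = K := by omega
          have hHsub : Hneed d m K ⊆ R := Hneed_subset_of_parents hiK' hpar
          have hKR' : KR (K + 1) (insert (ZNode.v i) R) := by
            intro j hj
            rcases mem_insert.1 hj with hj | hj
            · have : j = i := by injection hj
              rw [this]; omega
            · exact lt_trans (hK j hj) (by omega)
          have hbound : (K + 1) * d + ((insert (ZNode.v i) R) ∩ Hneed d m (K + 1)).card ≤ c₀ := by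
            by_cases hK0 : K = 0
            · subst hK0
              have h1 := cap_one (g := g) hmem (by rw [hiK']; exact hHsub)
              rw [hiK'] at h1
              omega
            · have hjlt : (i : ℕ) - 1 < m := by omega
              have hjR : ZNode.v (⟨(i : ℕ) - 1, hjlt⟩ : Fin m) ∈ R :=
                hpar _ (show ((i : ℕ) = ((i : ℕ) - 1) + 1) by omega)
              have h0 := cap_succ (g := g) (j := ⟨(i : ℕ) - 1, hjlt⟩)
                (by simp; omega) hmem (by rw [hiK']; exact hHsub) hjR
              rw [hiK'] at h0
              have hRH : R ∩ Hneed d m K = Hneed d m K := inter_eq_right.2 hHsub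
              rw [hRH, Hneed_card] at hL
              have hexp : (K + 1) * d = K * d + d := by ring
              omega
          obtain ⟨K', h1, h2, h3, h4⟩ := ih (insert (ZNode.v i) R) B (K + 1) hco' hsv' hu' hKR' hbound
          exact ⟨K', by omega, h2, h3, h4⟩
    · -- delete w
      simp only [run, applyOp] at *
      refine ih (R.erase w) B K hco' hsv' hu' ?_ ?_
      · intro j hj
        exact hK j (mem_of_mem_erase hj)
      · have hsubc : ((R.erase w) ∩ Hneed d m K).card ≤ (R ∩ Hneed d m K).card :=
          card_le_card (inter_subset_inter (erase_subset _ _) (Finset.Subset.refl _))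
        omega

lemma comp1 {g : ℝ} :
    ∀ (l : List (Op (ZNode d m))) (R B : Finset (ZNode d m)) (K : ℕ),
    compOnly l →
    (∀ i : Fin m, Op.compute (ZNode.v i) ∉ l) →
    KR K R →
    KR K (run R B l).1 ∧ (run R B l).2 = B := by
  intro l
  induction l with
  | nil => intro R B K _ _ hK; exact ⟨hK, rfl⟩
  | cons op rest ih =>
    intro R B K hco hv hK
    have hco' : compOnly rest := fun o h => hco o (List.mem_cons_of_mem _ h)
    have hv' : ∀ i : Fin m, Op.compute (ZNode.v i) ∉ rest :=
      fun i h => hv i (List.mem_cons_of_mem _ h)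
    rcases hco op (List.mem_cons_self) with ⟨w, rfl⟩ | ⟨w, rfl⟩
    · simp only [run, applyOp] at *
      refine ih (insert w R) B K hco' hv' ?_
      intro j hj
      rcases mem_insert.1 hj with hj | hj
      · exact absurd (hj ▸ List.mem_cons_self) (hv j)
      · exact hK j hj
    · simp only [run, applyOp] at *
      exact ih (R.erase w) B K hco' hv' (fun j hj => hK j (mem_of_mem_erase hj))

lemma step_inv {g : ℝ} {c : Config (ZNode d m) 2} {S : Superstep (ZNode d m) 2} {K ℓ : ℕ}
    (hval : ssValid (ZI d m g) c S)
    (h0 : ∀ p (i : Fin m), Op.compute (ZNode.v i) ∈ S.comp p → p = 0)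
    (h1 : ∀ p (i : Fin m), Op.compute (ZNode.u i) ∈ S.comp p → p = 1)
    (hK0 : KR K (c.R 0)) (hK1 : KR K (c.R 1)) (hKB : KR K c.B)
    (hL : K * d + (c.R 0 ∩ Hneed d m K).card ≤ ℓ + d + 1) :
    ∃ K', K ≤ K' ∧ KR K' ((stepConfig c S).R 0) ∧ KR K' ((stepConfig c S).R 1) ∧
      KR K' ((stepConfig c S).B) ∧
      K' * d + ((stepConfig c S).R 0 ∩ Hneed d m K').card ≤ (ℓ + (S.load 0).length) + d + 1 := by
  obtain ⟨hcomp, hseq, hsave, hload, _⟩ := hval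
  have hu0 : ∀ i : Fin m, Op.compute (ZNode.u i) ∉ S.comp 0 :=
    fun i h => absurd (h1 0 i h) (by decide)
  obtain ⟨K', hKK', hKA0, _, hL'⟩ :=
    comp0 (ℓ + d + 1) (by omega) (S.comp 0) (c.R 0) c.B K (hcomp (0 : Fin 2)) (hseq (0 : Fin 2)) hu0 hK0 hL
  have hv1 : ∀ i : Fin m, Op.compute (ZNode.v i) ∉ S.comp 1 :=
    fun i h => absurd (h0 1 i h) (by decide)
  obtain ⟨hKA1, _⟩ := comp1 (g := g) (S.comp 1) (c.R 1) c.B K (hcomp (1 : Fin 2)) hv1 hK1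
  have hKA1' : KR K' (afterComp c S 1) := KR_mono hKK' hKA1
  have hKA0' : KR K' (afterComp c S 0) := hKA0
  have hKnewB : KR K' (newB c S) := by
    intro i hi
    rcases mem_union.1 hi with hi | hi
    · exact KR_mono hKK' hKB i hi
    · obtain ⟨p, _, hp⟩ := mem_biUnion.1 hi
      have hp' : ZNode.v i ∈ afterComp c S p := hsave p _ (List.mem_toFinset.1 hp)
      fin_cases p
      · exact hKA0' i hp'
      · exact hKA1' i hp'
  have hdel : ∀ p, afterDel c S p ⊆ afterComp c S p := by
    intro p
    rw [afterDel, foldl_erase_eq]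
    exact sdiff_subset
  have hKload : ∀ p, KR K' (afterLoad c S p) := by
    intro p i hi
    rcases mem_union.1 hi with hi | hi
    · fin_cases p
      · exact hKA0' i (hdel 0 hi)
      · exact hKA1' i (hdel 1 hi)
    · exact hKnewB i (hload p _ (List.mem_toFinset.1 hi))
  refine ⟨K', hKK', hKload 0, hKload 1, hKnewB, ?_⟩
  have hcard : ((afterLoad c S 0) ∩ Hneed d m K').card ≤
      ((afterComp c S 0) ∩ Hneed d m K').card + (S.load 0).length := by
    rw [afterLoad, union_inter_distrib_right]
    refine le_trans (card_union_le _ _) ?_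
    have h1' : ((afterDel c S 0) ∩ Hneed d m K').card ≤ ((afterComp c S 0) ∩ Hneed d m K').card :=
      card_le_card (inter_subset_inter (hdel 0) (Finset.Subset.refl _))
    have h2' : (((S.load 0).toFinset : Finset (ZNode d m)) ∩ Hneed d m K').card ≤ (S.load 0).length :=
      le_trans (card_le_card inter_subset_left) (S.load 0).toFinset_card_le
    omega
  have : (stepConfig c S).R 0 = afterLoad c S 0 := rfl
  rw [this]
  have hac : (run (c.R 0) c.B (S.comp 0)).1 = afterComp c S 0 := rfl
  rw [hac] at hL'
  omega

lemma sched_inv {g : ℝ} :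
    ∀ (sched : Schedule (ZNode d m) 2) (c : Config (ZNode d m) 2) (K ℓ : ℕ),
    schedValidFrom (ZI d m g) c sched →
    (∀ S ∈ sched, ∀ p (i : Fin m), Op.compute (ZNode.v i) ∈ S.comp p → p = 0) →
    (∀ S ∈ sched, ∀ p (i : Fin m), Op.compute (ZNode.u i) ∈ S.comp p → p = 1) →
    KR K (c.R 0) → KR K (c.R 1) → KR K c.B →
    K * d + (c.R 0 ∩ Hneed d m K).card ≤ ℓ + d + 1 →
    ∃ K', K ≤ K' ∧ KR K' (runSched c sched).B ∧
      K' * d ≤ ℓ + totload sched + d + 1 := by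
  intro sched
  induction sched with
  | nil =>
    intro c K ℓ _ _ _ _ _ hKB hL
    exact ⟨K, le_rfl, hKB, by simp [totload]; omega⟩
  | cons S rest ih =>
    intro c K ℓ hsvf h0 h1 hK0 hK1 hKB hL
    obtain ⟨hss, hsvf'⟩ := hsvf
    obtain ⟨K', hKK', hK0', hK1', hKB', hL'⟩ :=
      step_inv hss (h0 S (List.mem_cons_self)) (h1 S (List.mem_cons_self)) hK0 hK1 hKB hL
    obtain ⟨K'', hKK'', hKB'', hL''⟩ :=
      ih (stepConfig c S) K' (ℓ + (S.load 0).length) hsvf'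
        (fun T hT => h0 T (List.mem_cons_of_mem _ hT))
        (fun T hT => h1 T (List.mem_cons_of_mem _ hT)) hK0' hK1' hKB' hL'
    refine ⟨K'', le_trans hKK' hKK'', hKB'', ?_⟩
    have : totload (S :: rest) = (S.load 0).length + totload rest := by
      simp [totload]
    omega

lemma v_not_source {g : ℝ} (hd : 0 < d) (i : Fin m) :
    ¬ isSource (ZI d m g) (ZNode.v i) := by
  intro h
  apply h
  rcases Nat.even_or_odd ((i : ℕ) + 1) with he | ho
  · exact ⟨ZNode.h1 ⟨0, hd⟩, he⟩
  · exact ⟨ZNode.h2 ⟨0, hd⟩, ho⟩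

lemma v_last_sink {g : ℝ} (hm0 : 0 < m) :
    isSink (ZI d m g) (ZNode.v (⟨m - 1, by omega⟩ : Fin m)) := by
  rintro ⟨w, hw⟩
  cases w with
  | h1 a => exact hw
  | h2 a => exact hw
  | u j => exact hw
  | v j =>
    have : (j : ℕ) = (m - 1) + 1 := hw
    have := j.isLt
    omega

lemma restricted_LB {g : ℝ} (hd : 1 ≤ d) (hm1 : 1 ≤ m) (hg : 0 ≤ g)
    (sched : Schedule (ZNode d m) 2)
    (hv : Valid (ZI d m g) sched)
    (h0 : ∀ S ∈ sched, ∀ p (i : Fin m), Op.compute (ZNode.v i) ∈ S.comp p → p = 0)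
    (h1 : ∀ S ∈ sched, ∀ p (i : Fin m), Op.compute (ZNode.u i) ∈ S.comp p → p = 1) :
    ((m : ℝ) * d - d - 1) * g ≤ syncCost (ZI d m g) sched := by
  obtain ⟨B0, hB0, hsvf, hsink⟩ := hv
  have hKB0 : KR 0 B0 := fun i hi => absurd ((hB0 _).1 hi) (v_not_source (g := g) hd i)
  obtain ⟨K', _, hKB, hld⟩ := sched_inv sched ⟨fun _ => ∅, B0⟩ 0 0 hsvf h0 h1
    (fun i hi => absurd hi (Finset.notMem_empty _))
    (fun i hi => absurd hi (Finset.notMem_empty _)) hKB0 (by simp)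
  have hvm : ZNode.v (⟨m - 1, by omega⟩ : Fin m) ∈
      (runSched (⟨fun _ => ∅, B0⟩ : Config (ZNode d m) 2) sched).B :=
    hsink _ (v_last_sink (by omega))
  have hlt := hKB _ hvm
  simp only at hlt
  have hKm : m ≤ K' := by omega
  have htot : m * d ≤ totload sched + d + 1 :=
    le_trans (Nat.mul_le_mul_right d hKm) (by omega)
  refine le_trans ?_ (syncCost_ge_loads hg sched)
  apply mul_le_mul_of_nonneg_right _ hg
  have : (m * d : ℝ) ≤ (totload sched : ℝ) + d + 1 := by exact_mod_cast htot
  linarith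

end ZAux
end MBSP

namespace MBSP
namespace ZAux

open Finset

variable {d m : ℕ}

def vnode (hm0 : 0 < m) (j : ℕ) : ZNode d m := ZNode.v ⟨j % m, Nat.mod_lt _ hm0⟩
def unode (hm0 : 0 < m) (j : ℕ) : ZNode d m := ZNode.u ⟨j % m, Nat.mod_lt _ hm0⟩

def H1l (d m : ℕ) : List (ZNode d m) := (List.finRange d).map ZNode.h1
def H2l (d m : ℕ) : List (ZNode d m) := (List.finRange d).map ZNode.h2

lemma H1l_toFinset : (H1l d m).toFinset = H1f d m := by
  ext w; simp [H1l, H1f]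

lemma H2l_toFinset : (H2l d m).toFinset = H2f d m := by
  ext w; simp [H2l, H2f]

lemma H1l_length : (H1l d m).length = d := by simp [H1l]
lemma H2l_length : (H2l d m).length = d := by simp [H2l]

def B0f (d m : ℕ) : Finset (ZNode d m) := H1f d m ∪ H2f d m

lemma u_not_source {g : ℝ} (hd : 0 < d) (i : Fin m) :
    ¬ isSource (ZI d m g) (ZNode.u i) := by
  intro h
  apply h
  rcases Nat.even_or_odd ((i : ℕ) + 1) with he | ho
  · exact ⟨ZNode.h2 ⟨0, hd⟩, he⟩
  · exact ⟨ZNode.h1 ⟨0, hd⟩, ho⟩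

lemma initB_B0f {g : ℝ} (hd : 0 < d) : initB (ZI d m g) (B0f d m) := by
  intro w
  cases w with
  | h1 a =>
    simp only [B0f, mem_union, mem_H1f, mem_H2f]
    constructor
    · rintro - ⟨u, hu⟩
      exact no_edge_to_h1 u a hu
    · intro _; exact Or.inl ⟨a, rfl⟩
  | h2 a =>
    simp only [B0f, mem_union, mem_H1f, mem_H2f]
    constructor
    · rintro - ⟨u, hu⟩
      exact no_edge_to_h2 u a hu
    · intro _; exact Or.inr ⟨a, rfl⟩
  | v i =>
    constructor
    · intro hw
      rcases Finset.mem_union.1 hw with hw | hw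
      · rcases mem_H1f.1 hw with ⟨a, ha⟩; exact absurd ha (by simp)
      · rcases mem_H2f.1 hw with ⟨a, ha⟩; exact absurd ha (by simp)
    · intro hs
      exact absurd hs (v_not_source (g := g) hd i)
  | u i =>
    constructor
    · intro hw
      rcases Finset.mem_union.1 hw with hw | hw
      · rcases mem_H1f.1 hw with ⟨a, ha⟩; exact absurd ha (by simp)
      · rcases mem_H2f.1 hw with ⟨a, ha⟩; exact absurd ha (by simp)
    · intro hs
      exact absurd hs (u_not_source (g := g) hd i)

lemma u_last_sink {g : ℝ} (hm0 : 0 < m) :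
    isSink (ZI d m g) (ZNode.u (⟨m - 1, by omega⟩ : Fin m)) := by
  rintro ⟨w, hw⟩
  cases w with
  | h1 a => exact hw
  | h2 a => exact hw
  | v j => exact hw
  | u j =>
    have : (j : ℕ) = (m - 1) + 1 := hw
    have := j.isLt
    omega

lemma sink_char {g : ℝ} (hd : 0 < d) (hm0 : 0 < m) (w : ZNode d m)
    (hs : isSink (ZI d m g) w) :
    w = ZNode.v (⟨m - 1, by omega⟩ : Fin m) ∨ w = ZNode.u (⟨m - 1, by omega⟩ : Fin m) := by
  cases w with
  | h1 a =>
    exact absurd ⟨ZNode.u (⟨0, hm0⟩ : Fin m),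
      (show Odd ((0 : ℕ) + 1) by simp)⟩ hs
  | h2 a =>
    exact absurd ⟨ZNode.v (⟨0, hm0⟩ : Fin m),
      (show Odd ((0 : ℕ) + 1) by simp)⟩ hs
  | v i =>
    left
    by_cases hi : (i : ℕ) = m - 1
    · congr 1; exact Fin.ext hi
    · have hlt : (i : ℕ) + 1 < m := by have := i.isLt; omega
      exact absurd ⟨ZNode.v ⟨(i : ℕ) + 1, hlt⟩, rfl⟩ hs
  | u i =>
    right
    by_cases hi : (i : ℕ) = m - 1
    · congr 1; exact Fin.ext hi
    · have hlt : (i : ℕ) + 1 < m := by have := i.isLt; omega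
      exact absurd ⟨ZNode.u ⟨(i : ℕ) + 1, hlt⟩, rfl⟩ hs

lemma insert2_sdiff {α : Type*} [DecidableEq α] {a b : α} {H : Finset α}
    (ha : a ∉ H) (hab : a ≠ b) :
    (insert a (insert b H)) \ (H ∪ {b}) = {a} := by
  ext w
  simp only [mem_sdiff, mem_insert, mem_union, mem_singleton]
  constructor
  · rintro ⟨rfl | rfl | h1, h2⟩
    · rfl
    · exact absurd (Or.inr rfl) h2
    · exact absurd (Or.inl h1) h2
  · rintro rfl
    exact ⟨Or.inl rfl, by rintro (h | rfl); exacts [ha h, hab rfl]⟩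

/-! ### Construction 2: the restricted schedule -/

def yB (hm0 : 0 < m) (p : Fin 2) (j : ℕ) : ZNode d m :=
  if p = 0 then vnode hm0 j else unode hm0 j

def HneedP (d m : ℕ) (p : Fin 2) (j : ℕ) : Finset (ZNode d m) :=
  if p = 0 then (if j % 2 = 0 then H2f d m else H1f d m)
  else (if j % 2 = 0 then H1f d m else H2f d m)

def HneedLP (d m : ℕ) (p : Fin 2) (j : ℕ) : List (ZNode d m) :=
  if p = 0 then (if j % 2 = 0 then H2l d m else H1l d m)
  else (if j % 2 = 0 then H1l d m else H2l d m)

lemma HneedLP_toFinset {p : Fin 2} {j : ℕ} :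
    (HneedLP d m p j).toFinset = HneedP d m p j := by
  unfold HneedLP HneedP
  split_ifs <;> simp [H1l_toFinset, H2l_toFinset]

lemma HneedP_card {p : Fin 2} {j : ℕ} : (HneedP d m p j).card = d := by
  unfold HneedP
  split_ifs <;> simp [card_H1f, card_H2f]

lemma HneedP_subset_B0f {p : Fin 2} {j : ℕ} : HneedP d m p j ⊆ B0f d m := by
  unfold HneedP B0f
  split_ifs <;> [exact subset_union_right; exact subset_union_left;
    exact subset_union_left; exact subset_union_right]

lemma yB_not_mem_HneedP (hm0 : 0 < m) {p q : Fin 2} {j k : ℕ} :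
    yB hm0 p j ∉ HneedP d m q k := by
  unfold yB vnode unode HneedP
  split_ifs <;> simp [mem_H1f, mem_H2f]

lemma yB_ne (hm0 : 0 < m) {p : Fin 2} {j k : ℕ} (hj : j < m) (hk : k < m) (hjk : j ≠ k) :
    yB (d := d) hm0 p j ≠ yB hm0 p k := by
  unfold yB vnode unode
  split_ifs <;> simp [Fin.ext_iff, Nat.mod_eq_of_lt hj, Nat.mod_eq_of_lt hk] <;> exact hjk

lemma yB_edge_exists (hm0 : 0 < m) (hd0 : 0 < d) (p : Fin 2) (j : ℕ) :
    ∃ w, zEdge d m w (yB hm0 p j) := by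
  unfold yB vnode unode
  rcases Nat.even_or_odd (j % m + 1) with he | ho
  · split_ifs
    · exact ⟨ZNode.h1 ⟨0, hd0⟩, he⟩
    · exact ⟨ZNode.h2 ⟨0, hd0⟩, he⟩
  · split_ifs
    · exact ⟨ZNode.h2 ⟨0, hd0⟩, ho⟩
    · exact ⟨ZNode.h1 ⟨0, hd0⟩, ho⟩

lemma yB_parents (hm0 : 0 < m) {p : Fin 2} {j : ℕ} (hj : j < m) (w : ZNode d m)
    (hw : zEdge d m w (yB hm0 p j)) :
    w ∈ HneedP d m p j ∨ (1 ≤ j ∧ w = yB hm0 p (j - 1)) := by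
  have hmod : j % m = j := Nat.mod_eq_of_lt hj
  fin_cases p
  · -- p = 0 : v-node
    simp only [yB, vnode, if_pos rfl] at hw ⊢
    cases w with
    | h1 a =>
      have he : Even (j % m + 1) := hw
      rw [hmod] at he
      left
      have : j % 2 = 1 := by rw [Nat.even_iff] at he; omega
      simp [HneedP, this, mem_H1f]
    | h2 a =>
      have ho : Odd (j % m + 1) := hw
      rw [hmod] at ho
      left
      have : j % 2 = 0 := by rw [Nat.odd_iff] at ho; omega
      simp [HneedP, this, mem_H2f]
    | v i =>
      have hi : (j : ℕ) % m = (i : ℕ) + 1 := hw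
      rw [hmod] at hi
      right
      refine ⟨by omega, ?_⟩
      have : (j - 1) % m = (i : ℕ) := by
        rw [Nat.mod_eq_of_lt (by omega)]; omega
      simp [vnode, Fin.ext_iff, this]
    | u i => exact absurd hw (by simp [zEdge])
  · -- p = 1 : u-node
    simp only [yB, unode] at hw ⊢
    norm_num at hw ⊢
    cases w with
    | h1 a =>
      have ho : Odd (j % m + 1) := hw
      rw [hmod] at ho
      left
      have : j % 2 = 0 := by rw [Nat.odd_iff] at ho; omega
      simp [HneedP, this, mem_H1f]
    | h2 a =>
      have he : Even (j % m + 1) := hw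
      rw [hmod] at he
      left
      have : j % 2 = 1 := by rw [Nat.even_iff] at he; omega
      simp [HneedP, this, mem_H2f]
    | u i =>
      have hi : (j : ℕ) % m = (i : ℕ) + 1 := hw
      rw [hmod] at hi
      right
      refine ⟨by omega, ?_⟩
      have : (j - 1) % m = (i : ℕ) := by
        rw [Nat.mod_eq_of_lt (by omega)]; omega
      simp [unode, Fin.ext_iff, this]
    | v i => exact absurd hw (by simp [zEdge])

def stepB (hm0 : 0 < m) (d' : ℕ) (j : ℕ) : Superstep (ZNode d' m) 2 where
  comp p := [Op.compute (yB hm0 p j)]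
  save p := [yB hm0 p j]
  del p := HneedLP d' m p j ++ (if j = 0 then [] else [yB hm0 p (j - 1)])
  load p := HneedLP d' m p (j + 1)

def confB (hm0 : 0 < m) (d' : ℕ) (j : ℕ) (B : Finset (ZNode d' m)) : Config (ZNode d' m) 2 :=
  ⟨fun p => insert (yB hm0 p (j - 1)) (HneedP d' m p j), B⟩

lemma stepB_afterComp {g : ℝ} (hm0 : 0 < m) (j : ℕ) (B : Finset (ZNode d m)) (p : Fin 2) :
    afterComp (confB hm0 d j B) (stepB hm0 d j) p =
      insert (yB hm0 p j) (insert (yB hm0 p (j - 1)) (HneedP d m p j)) := rfl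

lemma stepB_step {g : ℝ} (hm0 : 0 < m) (hd0 : 0 < d) {j : ℕ} (hj1 : 1 ≤ j) (hjm : j < m)
    (B : Finset (ZNode d m)) (hB : B0f d m ⊆ B) :
    ssValid (ZI d m g) (confB hm0 d j B) (stepB hm0 d j) ∧
    stepConfig (confB hm0 d j B) (stepB hm0 d j) =
      confB hm0 d (j + 1) (newB (confB hm0 d j B) (stepB hm0 d j)) ∧
    B ⊆ newB (confB hm0 d j B) (stepB hm0 d j) ∧
    (∀ p : Fin 2, yB hm0 p j ∈ newB (confB hm0 d j B) (stepB hm0 d j)) ∧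
    B0f d m ⊆ newB (confB hm0 d j B) (stepB hm0 d j) := by
  set c := confB hm0 d j B with hc
  set S := stepB hm0 d j with hS
  have hR : ∀ p : Fin 2, c.R p = insert (yB hm0 p (j - 1)) (HneedP d m p j) := fun p => rfl
  have hBc : c.B = B := rfl
  have hne : ∀ p : Fin 2, yB (d := d) hm0 p j ≠ yB hm0 p (j - 1) :=
    fun p => yB_ne hm0 hjm (by omega) (by omega)
  have hdel : ∀ p : Fin 2, afterDel c S p = {yB hm0 p j} := by
    intro p
    rw [afterDel, foldl_erase_eq, stepB_afterComp (g := g)]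
    have hdl : (S.del p).toFinset = HneedP d m p j ∪ {yB hm0 p (j - 1)} := by
      have : (j = 0) = False := by simp; omega
      simp [hS, stepB, this, HneedLP_toFinset]
    rw [hdl]
    exact insert2_sdiff (yB_not_mem_HneedP hm0) (hne p)
  have hload : ∀ p : Fin 2, afterLoad c S p = insert (yB hm0 p j) (HneedP d m p (j + 1)) := by
    intro p
    rw [afterLoad, hdel p]
    have : (S.load p).toFinset = HneedP d m p (j + 1) := HneedLP_toFinset
    rw [this]; ext w; simp
  have hnewB : ∀ p : Fin 2, yB hm0 p j ∈ newB c S := by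
    intro p
    refine mem_union_right _ (mem_biUnion.2 ⟨p, mem_univ _, ?_⟩)
    simp [hS, stepB]
  refine ⟨⟨?_, ?_, ?_, ?_, ?_⟩, ?_, ?_, hnewB, ?_⟩
  · -- compOnly
    intro p op hop
    simp only [hS, stepB, List.mem_singleton] at hop
    exact Or.inl ⟨_, hop⟩
  · -- seqValid
    intro p
    refine ⟨⟨yB_edge_exists hm0 hd0 p j, ?_⟩, ?_, trivial⟩
    · intro w hw
      rcases yB_parents hm0 hjm w hw with hw' | ⟨-, rfl⟩
      · exact mem_insert_of_mem hw'
      · exact mem_insert_self _ _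
    · rw [memOK_iff']
      calc (insert (yB hm0 p j) (c.R p)).card ≤ (c.R p).card + 1 := card_insert_le _ _
        _ ≤ ((HneedP d m p j).card + 1) + 1 := by
            have := card_insert_le (yB (d := d) hm0 p (j-1)) (HneedP d m p j)
            rw [hR p]; omega
        _ ≤ d + 2 := by rw [HneedP_card]
  · -- saves
    intro p v hv
    simp only [hS, stepB, List.mem_singleton] at hv
    rw [hv, stepB_afterComp (g := g)]
    exact mem_insert_self _ _
  · -- loads
    intro p v hv
    have : v ∈ HneedP d m p (j + 1) := by
      rw [← HneedLP_toFinset]; exact List.mem_toFinset.2 hv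
    exact mem_union_left _ (hB (HneedP_subset_B0f this))
  · -- memOK afterLoad
    intro p
    rw [memOK_iff', hload p]
    calc (insert (yB hm0 p j) (HneedP d m p (j + 1))).card
        ≤ (HneedP d m p (j + 1)).card + 1 := card_insert_le _ _
      _ ≤ d + 2 := by rw [HneedP_card]; omega
  · -- stepConfig
    show (⟨fun p => afterLoad c S p, newB c S⟩ : Config (ZNode d m) 2) = _
    unfold confB
    congr 1
    funext p
    rw [hload p]
    congr 1
  · exact subset_union_left
  · exact Finset.Subset.trans hB subset_union_left

def buildB (hm0 : 0 < m) (d' : ℕ) : ℕ → ℕ → Schedule (ZNode d' m)  2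
  | _, 0 => []
  | j, (n + 1) => stepB hm0 d' j :: buildB hm0 d' (j + 1) n

lemma buildB_mem (hm0 : 0 < m) {S : Superstep (ZNode d m) 2} :
    ∀ n j, S ∈ buildB hm0 d j n → ∃ j', S = stepB hm0 d j' := by
  intro n
  induction n with
  | zero => intro j h; simp [buildB] at h
  | succ n ih =>
    intro j h
    rcases List.mem_cons.1 h with rfl | h
    · exact ⟨j, rfl⟩
    · exact ih (j + 1) h

lemma buildB_valid {g : ℝ} (hm0 : 0 < m) (hd0 : 0 < d) :
    ∀ (n j : ℕ), 1 ≤ j → j + n ≤ m → ∀ (B : Finset (ZNode d m)), B0f d m ⊆ B →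
    schedValidFrom (ZI d m g) (confB hm0 d j B) (buildB hm0 d j n) ∧
    B ⊆ (runSched (confB hm0 d j B) (buildB hm0 d j n)).B ∧
    (∀ p : Fin 2, ∀ i, j ≤ i → i < j + n →
      yB hm0 p i ∈ (runSched (confB hm0 d j B) (buildB hm0 d j n)).B) := by
  intro n
  induction n with
  | zero =>
    intro j hj1 hjn B hB
    exact ⟨trivial, Finset.Subset.refl _, fun p i h1 h2 => absurd h2 (by omega)⟩
  | succ n ih =>
    intro j hj1 hjn B hB
    obtain ⟨hss, hcfg, hBsub, hyB, hB0'⟩ :=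
      stepB_step (g := g) hm0 hd0 hj1 (by omega) B hB
    set B' := newB (confB hm0 d j B) (stepB hm0 d j) with hB'
    obtain ⟨ihv, ihB, ihy⟩ := ih (j + 1) (by omega) (by omega) B' hB0'
    have hrun : runSched (confB hm0 d j B) (buildB hm0 d j (n + 1)) =
        runSched (confB hm0 d (j + 1) B') (buildB hm0 d (j + 1) n) := by
      show runSched (stepConfig (confB hm0 d j B) (stepB hm0 d j)) (buildB hm0 d (j + 1) n) = _
      rw [hcfg]
    refine ⟨⟨hss, ?_⟩, ?_, ?_⟩
    · show schedValidFrom (ZI d m g) (stepConfig (confB hm0 d j B) (stepB hm0 d j))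
        (buildB hm0 d (j + 1) n)
      rw [hcfg]
      exact ihv
    · rw [hrun]
      exact Finset.Subset.trans hBsub ihB
    · intro p i h1 h2
      rw [hrun]
      rcases eq_or_lt_of_le h1 with rfl | hgt
      · exact ihB (hyB p)
      · exact ihy p i (by omega) (by omega)

lemma insert1_sdiff {α : Type*} [DecidableEq α] {a : α} {H : Finset α} (ha : a ∉ H) :
    (insert a H) \ H = {a} := by
  ext w
  simp only [mem_sdiff, mem_insert, mem_singleton]
  constructor
  · rintro ⟨rfl | h1, h2⟩
    · rfl
    · exact absurd h1 h2
  · rintro rfl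
    exact ⟨Or.inl rfl, ha⟩

def S0B (hm0 : 0 < m) (d' : ℕ) : Superstep (ZNode d' m) 2 :=
  ⟨fun _ => [], fun _ => [], fun _ => [], fun p => HneedLP d' m p 0⟩

lemma stepB_restr_v (hm0 : 0 < m) (j' : ℕ) (p : Fin 2) (i : Fin m)
    (h : Op.compute (ZNode.v i) ∈ (stepB hm0 d j').comp p) : p = 0 := by
  simp only [stepB, List.mem_singleton] at h
  have h' : ZNode.v i = yB (d := d) hm0 p j' := by injection h
  fin_cases p
  · rfl
  · exact absurd h' (by simp [yB, unode])

lemma stepB_restr_u (hm0 : 0 < m) (j' : ℕ) (p : Fin 2) (i : Fin m)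
    (h : Op.compute (ZNode.u i) ∈ (stepB hm0 d j').comp p) : p = 1 := by
  simp only [stepB, List.mem_singleton] at h
  have h' : ZNode.u i = yB (d := d) hm0 p j' := by injection h
  fin_cases p
  · exact absurd h' (by simp [yB, vnode])
  · rfl

lemma exists_restricted {g : ℝ} (hm2 : 2 ≤ m) (hd0 : 0 < d) :
    ∃ sched : Schedule (ZNode d m) 2,
      Valid (ZI d m g) sched ∧
      (∀ S ∈ sched, ∀ p : Fin 2, ∀ i : Fin m, Op.compute (ZNode.v i) ∈ S.comp p → p = 0) ∧
      (∀ S ∈ sched, ∀ p : Fin 2, ∀ i : Fin m, Op.compute (ZNode.u i) ∈ S.comp p → p = 1) := by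
  have hm0 : 0 < m := by omega
  set c0 : Config (ZNode d m) 2 := ⟨fun _ => ∅, B0f d m⟩ with hc0
  set sched : Schedule (ZNode d m) 2 :=
    S0B hm0 d :: stepB hm0 d 0 :: buildB hm0 d 1 (m - 1) with hsched
  -- step S0B
  have hAL0 : ∀ p : Fin 2, afterLoad c0 (S0B hm0 d) p = HneedP d m p 0 := by
    intro p
    rw [afterLoad]
    have h1 : afterDel c0 (S0B hm0 d) p = ∅ := rfl
    rw [h1]
    have h2 : ((S0B hm0 d).load p).toFinset = HneedP d m p 0 := HneedLP_toFinset
    rw [h2, empty_union]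
  have hss0 : ssValid (ZI d m g) c0 (S0B hm0 d) := by
    refine ⟨?_, ?_, ?_, ?_, ?_⟩
    · intro p op hop; simp [S0B] at hop
    · intro p; trivial
    · intro p v hv; simp [S0B] at hv
    · intro p v hv
      exact mem_union_left _ (HneedP_subset_B0f (by rw [← HneedLP_toFinset]; exact List.mem_toFinset.2 hv))
    · intro p
      rw [memOK_iff', hAL0 p, HneedP_card]
      omega
  set B1 : Finset (ZNode d m) := newB c0 (S0B hm0 d) with hB1
  have hcfg0 : stepConfig c0 (S0B hm0 d) = ⟨fun p => HneedP d m p 0, B1⟩ := by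
    unfold stepConfig
    congr 1
    funext p
    exact hAL0 p
  have hB0B1 : B0f d m ⊆ B1 := subset_union_left
  -- step (stepB 0)
  set c1 : Config (ZNode d m) 2 := ⟨fun p => HneedP d m p 0, B1⟩ with hc1
  have hAC1 : ∀ p : Fin 2, afterComp c1 (stepB hm0 d 0) p =
      insert (yB hm0 p 0) (HneedP d m p 0) := fun p => rfl
  have hdel1 : ∀ p : Fin 2, afterDel c1 (stepB hm0 d 0) p = {yB hm0 p 0} := by
    intro p
    rw [afterDel, foldl_erase_eq]
    have hdl : ((stepB hm0 d 0).del p).toFinset = HneedP d m p 0 := by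
      simp [stepB, HneedLP_toFinset]
    rw [hdl, hAC1 p]
    exact insert1_sdiff (yB_not_mem_HneedP hm0)
  have hAL1 : ∀ p : Fin 2, afterLoad c1 (stepB hm0 d 0) p =
      insert (yB hm0 p 0) (HneedP d m p 1) := by
    intro p
    rw [afterLoad, hdel1 p]
    have : ((stepB hm0 d 0).load p).toFinset = HneedP d m p 1 := HneedLP_toFinset
    rw [this]; ext w; simp
  have hss1 : ssValid (ZI d m g) c1 (stepB hm0 d 0) := by
    refine ⟨?_, ?_, ?_, ?_, ?_⟩
    · intro p op hop
      simp only [stepB, List.mem_singleton] at hop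
      exact Or.inl ⟨_, hop⟩
    · intro p
      refine ⟨⟨yB_edge_exists hm0 hd0 p 0, ?_⟩, ?_, trivial⟩
      · intro w hw
        rcases yB_parents hm0 (by omega) w hw with hw' | ⟨h0, -⟩
        · exact hw'
        · omega
      · rw [memOK_iff']
        calc (insert (yB hm0 p 0) (c1.R p)).card ≤ (c1.R p).card + 1 := card_insert_le _ _
          _ ≤ d + 2 := by
              have : (c1.R p).card = d := HneedP_card
              omega
    · intro p v hv
      simp only [stepB, List.mem_singleton] at hv
      rw [hv, hAC1 p]
      exact mem_insert_self _ _
    · intro p v hv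
      have : v ∈ HneedP d m p 1 := by rw [← HneedLP_toFinset]; exact List.mem_toFinset.2 hv
      exact mem_union_left _ (Finset.Subset.trans hB0B1 (by exact fun x hx => hx) (HneedP_subset_B0f this))
    · intro p
      rw [memOK_iff', hAL1 p]
      have h1 : (insert (yB hm0 p 0) (HneedP d m p 1)).card ≤ (HneedP d m p 1).card + 1 :=
        card_insert_le _ _
      have h2 : (HneedP d m p 1).card = d := HneedP_card
      omega
  set B2 : Finset (ZNode d m) := newB c1 (stepB hm0 d 0) with hB2
  have hcfg1 : stepConfig c1 (stepB hm0 d 0) = confB hm0 d 1 B2 := by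
    unfold stepConfig confB
    congr 1
    funext p
    rw [hAL1 p]
  have hB0B2 : B0f d m ⊆ B2 := Finset.Subset.trans hB0B1 subset_union_left
  obtain ⟨hbv, hbB, hby⟩ := buildB_valid (g := g) hm0 hd0 (m - 1) 1 (le_refl 1) (by omega) B2 hB0B2
  refine ⟨sched, ⟨B0f d m, initB_B0f hd0, ⟨hss0, ?_⟩, ?_⟩, ?_, ?_⟩
  · show schedValidFrom (ZI d m g) (stepConfig c0 (S0B hm0 d)) (stepB hm0 d 0 :: buildB hm0 d 1 (m - 1))
    rw [hcfg0]
    refine ⟨hss1, ?_⟩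
    show schedValidFrom (ZI d m g) (stepConfig c1 (stepB hm0 d 0)) (buildB hm0 d 1 (m - 1))
    rw [hcfg1]
    exact hbv
  · -- sinks
    intro w hw
    have hrun : (runSched c0 sched).B =
        (runSched (confB hm0 d 1 B2) (buildB hm0 d 1 (m - 1))).B := by
      show (runSched (stepConfig c0 (S0B hm0 d)) (stepB hm0 d 0 :: buildB hm0 d 1 (m - 1))).B = _
      rw [hcfg0]
      show (runSched (stepConfig c1 (stepB hm0 d 0)) (buildB hm0 d 1 (m - 1))).B = _
      rw [hcfg1]
    show w ∈ (runSched c0 sched).B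
    rw [hrun]
    have hy : ∀ p : Fin 2, yB hm0 p (m - 1) ∈
        (runSched (confB hm0 d 1 B2) (buildB hm0 d 1 (m - 1))).B := by
      intro p
      exact hby p (m - 1) (by omega) (by omega)
    rcases sink_char hd0 hm0 w hw with rfl | rfl
    · have : ZNode.v (⟨m - 1, by omega⟩ : Fin m) = yB (d := d) hm0 0 (m - 1) := by
        simp [yB, vnode, Fin.ext_iff, Nat.mod_eq_of_lt (by omega : m - 1 < m)]
      rw [this]; exact hy 0
    · have : ZNode.u (⟨m - 1, by omega⟩ : Fin m) = yB (d := d) hm0 1 (m - 1) := by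
        simp [yB, unode, Fin.ext_iff, Nat.mod_eq_of_lt (by omega : m - 1 < m)]
      rw [this]; exact hy 1
  · -- restriction v
    intro S hS p i hop
    rcases List.mem_cons.1 hS with rfl | hS
    · simp [S0B] at hop
    rcases List.mem_cons.1 hS with rfl | hS
    · exact stepB_restr_v hm0 0 p i hop
    · obtain ⟨j', rfl⟩ := buildB_mem hm0 _ _ hS
      exact stepB_restr_v hm0 j' p i hop
  · -- restriction u
    intro S hS p i hop
    rcases List.mem_cons.1 hS with rfl | hS
    · simp [S0B] at hop
    rcases List.mem_cons.1 hS with rfl | hS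
    · exact stepB_restr_u hm0 0 p i hop
    · obtain ⟨j', rfl⟩ := buildB_mem hm0 _ _ hS
      exact stepB_restr_u hm0 j' p i hop

end ZAux
end MBSP

namespace MBSP
namespace ZAux

open Finset

variable {d m : ℕ}

def otherP (p : Fin 2) : Fin 2 := if p = 0 then 1 else 0

lemma otherP_otherP (p : Fin 2) : otherP (otherP p) = p := by
  fin_cases p <;> rfl

def letterA (p : Fin 2) (j : ℕ) : Fin 2 := if j % 2 = 0 then otherP p else p

def xA (hm0 : 0 < m) (p : Fin 2) (j : ℕ) : ZNode d m := yB hm0 (letterA p j) j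

def HpF (d m : ℕ) (p : Fin 2) : Finset (ZNode d m) := if p = 0 then H1f d m else H2f d m
def HpL (d m : ℕ) (p : Fin 2) : List (ZNode d m) := if p = 0 then H1l d m else H2l d m

lemma HpL_toFinset {p : Fin 2} : (HpL d m p).toFinset = HpF d m p := by
  unfold HpL HpF; split_ifs <;> simp [H1l_toFinset, H2l_toFinset]

lemma HpL_length {p : Fin 2} : (HpL d m p).length = d := by
  unfold HpL; split_ifs <;> simp [H1l_length, H2l_length]

lemma HpF_card {p : Fin 2} : (HpF d m p).card = d := by
  unfold HpF; split_ifs <;> simp [card_H1f, card_H2f]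

lemma HpF_subset_B0f {p : Fin 2} : HpF d m p ⊆ B0f d m := by
  unfold HpF B0f; split_ifs
  · exact subset_union_left
  · exact subset_union_right

lemma HneedP_letterA {p : Fin 2} {j : ℕ} : HneedP d m (letterA p j) j = HpF d m p := by
  unfold HneedP HpF letterA otherP
  fin_cases p <;> rcases Nat.mod_two_eq_zero_or_one j with h2 | h2 <;>
    simp [h2]

lemma letterA_pred {p : Fin 2} {j : ℕ} (hj : 1 ≤ j) :
    letterA (otherP p) (j - 1) = letterA p j := by
  unfold letterA
  rcases Nat.mod_two_eq_zero_or_one j with h2 | h2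
  · have h3 : (j - 1) % 2 = 1 := by omega
    simp [h2, h3]
  · have h3 : (j - 1) % 2 = 0 := by omega
    simp [h2, h3, otherP_otherP]

lemma xA_pred {p : Fin 2} {j : ℕ} (hm0 : 0 < m) (hj : 1 ≤ j) :
    xA (d := d) hm0 (otherP p) (j - 1) = yB hm0 (letterA p j) (j - 1) := by
  unfold xA
  rw [letterA_pred hj]

lemma yB_not_mem_HpF (hm0 : 0 < m) {p q : Fin 2} {j : ℕ} :
    yB (d := d) hm0 p j ∉ HpF d m q := by
  unfold yB vnode unode HpF
  split_ifs <;> simp [mem_H1f, mem_H2f]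

lemma xA_parents (hm0 : 0 < m) {p : Fin 2} {j : ℕ} (hj : j < m) (w : ZNode d m)
    (hw : zEdge d m w (xA hm0 p j)) :
    w ∈ HpF d m p ∨ (1 ≤ j ∧ w = xA hm0 (otherP p) (j - 1)) := by
  rcases yB_parents hm0 hj w hw with hw' | ⟨h1, rfl⟩
  · left; rw [← HneedP_letterA (p := p) (j := j)]; exact hw'
  · right; exact ⟨h1, (xA_pred hm0 h1).symm⟩

lemma xA_edge_exists (hm0 : 0 < m) (hd0 : 0 < d) (p : Fin 2) (j : ℕ) :
    ∃ w, zEdge d m w (xA hm0 p j) := yB_edge_exists hm0 hd0 _ j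

lemma insert2_sdiff_pair {α : Type*} [DecidableEq α] {a b : α} {H : Finset α}
    (ha : a ∉ H) (hb : b ∉ H) (hab : a ≠ b) :
    (insert a (insert b H)) \ {b, a} = H := by
  ext w
  simp only [mem_sdiff, mem_insert, mem_singleton]
  constructor
  · rintro ⟨rfl | rfl | h1, h2⟩
    · exact absurd (Or.inr rfl) h2
    · exact absurd (Or.inl rfl) h2
    · exact h1
  · intro hw
    refine ⟨Or.inr (Or.inr hw), ?_⟩
    rintro (rfl | rfl)
    · exact hb hw
    · exact ha hw

lemma insert_sdiff_singleton' {α : Type*} [DecidableEq α] {a : α} {H : Finset α}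
    (ha : a ∉ H) : (insert a H) \ {a} = H := by
  ext w
  simp only [mem_sdiff, mem_insert, mem_singleton]
  constructor
  · rintro ⟨rfl | h1, h2⟩
    · exact absurd rfl h2
    · exact h1
  · intro hw
    exact ⟨Or.inr hw, fun h => ha (h ▸ hw)⟩

def stepA (hm0 : 0 < m) (d' : ℕ) (j : ℕ) : Superstep (ZNode d' m) 2 where
  comp p := [Op.compute (xA hm0 p j)]
  save p := [xA hm0 p j]
  del p := (if j = 0 then [] else [xA hm0 (otherP p) (j - 1)]) ++ [xA hm0 p j]
  load p := [xA hm0 (otherP p) j]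

def S0A (hm0 : 0 < m) (d' : ℕ) : Superstep (ZNode d' m) 2 :=
  ⟨fun _ => [], fun _ => [], fun _ => [], fun p => HpL d' m p⟩

def confA (hm0 : 0 < m) (d' : ℕ) (j : ℕ) (B : Finset (ZNode d' m)) : Config (ZNode d' m) 2 :=
  ⟨fun p => insert (xA hm0 (otherP p) (j - 1)) (HpF d' m p), B⟩

lemma stepA_afterComp {g : ℝ} (hm0 : 0 < m) (j : ℕ) (B : Finset (ZNode d m)) (p : Fin 2) :
    afterComp (confA hm0 d j B) (stepA hm0 d j) p =
      insert (xA hm0 p j) (insert (xA hm0 (otherP p) (j - 1)) (HpF d m p)) := rfl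

lemma xA_ne_pred (hm0 : 0 < m) {p : Fin 2} {j : ℕ} (hj1 : 1 ≤ j) (hjm : j < m) :
    xA (d := d) hm0 p j ≠ xA hm0 (otherP p) (j - 1) := by
  rw [xA_pred hm0 hj1]
  exact yB_ne hm0 hjm (by omega) (by omega)

lemma stepA_step {g : ℝ} (hm0 : 0 < m) (hd0 : 0 < d) {j : ℕ} (hj1 : 1 ≤ j) (hjm : j < m)
    (B : Finset (ZNode d m)) :
    ssValid (ZI d m g) (confA hm0 d j B) (stepA hm0 d j) ∧
    stepConfig (confA hm0 d j B) (stepA hm0 d j) =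
      confA hm0 d (j + 1) (newB (confA hm0 d j B) (stepA hm0 d j)) ∧
    B ⊆ newB (confA hm0 d j B) (stepA hm0 d j) ∧
    (∀ p : Fin 2, xA hm0 p j ∈ newB (confA hm0 d j B) (stepA hm0 d j)) := by
  set c := confA hm0 d j B with hc
  set S := stepA hm0 d j with hS
  have hne : ∀ p : Fin 2, xA (d := d) hm0 p j ≠ xA hm0 (otherP p) (j - 1) :=
    fun p => xA_ne_pred hm0 hj1 hjm
  have hxH : ∀ p q : Fin 2, ∀ k, xA (d := d) hm0 p k ∉ HpF d m q :=
    fun p q k => yB_not_mem_HpF hm0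
  have hdel : ∀ p : Fin 2, afterDel c S p = HpF d m p := by
    intro p
    rw [afterDel, foldl_erase_eq, stepA_afterComp (g := g)]
    have hdl : (S.del p).toFinset =
        {xA hm0 (otherP p) (j - 1), xA hm0 p j} := by
      have : (j = 0) = False := by simp; omega
      simp [hS, stepA, this]
    rw [hdl]
    exact insert2_sdiff_pair (hxH p p j) (hxH _ p _) (hne p)
  have hload : ∀ p : Fin 2, afterLoad c S p =
      insert (xA hm0 (otherP p) j) (HpF d m p) := by
    intro p
    rw [afterLoad, hdel p]
    have : (S.load p).toFinset = {xA hm0 (otherP p) j} := by simp [hS, stepA]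
    rw [this]
    ext w; simp
  have hnewB : ∀ p : Fin 2, xA hm0 p j ∈ newB c S := by
    intro p
    refine mem_union_right _ (mem_biUnion.2 ⟨p, mem_univ _, ?_⟩)
    simp [hS, stepA]
  refine ⟨⟨?_, ?_, ?_, ?_, ?_⟩, ?_, subset_union_left, hnewB⟩
  · intro p op hop
    simp only [hS, stepA, List.mem_singleton] at hop
    exact Or.inl ⟨_, hop⟩
  · intro p
    refine ⟨⟨xA_edge_exists hm0 hd0 p j, ?_⟩, ?_, trivial⟩
    · intro w hw
      rcases xA_parents hm0 hjm w hw with hw' | ⟨-, rfl⟩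
      · exact mem_insert_of_mem hw'
      · exact mem_insert_self _ _
    · rw [memOK_iff']
      calc (insert (xA hm0 p j) (c.R p)).card ≤ (c.R p).card + 1 := card_insert_le _ _
        _ ≤ d + 2 := by
            have h1 : (c.R p).card ≤ (HpF d m p).card + 1 := card_insert_le _ _
            have h2 : (HpF d m p).card = d := HpF_card
            omega
  · intro p v hv
    simp only [hS, stepA, List.mem_singleton] at hv
    rw [hv, stepA_afterComp (g := g)]
    exact mem_insert_self _ _
  · intro p v hv
    simp only [hS, stepA, List.mem_singleton] at hv
    rw [hv]
    exact hnewB (otherP p)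
  · intro p
    rw [memOK_iff', hload p]
    have h1 : (insert (xA hm0 (otherP p) j) (HpF d m p)).card ≤ (HpF d m p).card + 1 :=
      card_insert_le _ _
    have h2 : (HpF d m p).card = d := HpF_card
    omega
  · show (⟨fun p => afterLoad c S p, newB c S⟩ : Config (ZNode d m) 2) = _
    unfold confA
    congr 1
    funext p
    rw [hload p]
    congr 1

def buildA (hm0 : 0 < m) (d' : ℕ) : ℕ → ℕ → Schedule (ZNode d' m) 2
  | _, 0 => []
  | j, (n + 1) => stepA hm0 d' j :: buildA hm0 d' (j + 1) n

lemma buildA_valid {g : ℝ} (hm0 : 0 < m) (hd0 : 0 < d) :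
    ∀ (n j : ℕ), 1 ≤ j → j + n ≤ m → ∀ (B : Finset (ZNode d m)),
    schedValidFrom (ZI d m g) (confA hm0 d j B) (buildA hm0 d j n) ∧
    B ⊆ (runSched (confA hm0 d j B) (buildA hm0 d j n)).B ∧
    (∀ p : Fin 2, ∀ i, j ≤ i → i < j + n →
      xA hm0 p i ∈ (runSched (confA hm0 d j B) (buildA hm0 d j n)).B) := by
  intro n
  induction n with
  | zero =>
    intro j hj1 hjn B
    exact ⟨trivial, Finset.Subset.refl _, fun p i h1 h2 => absurd h2 (by omega)⟩
  | succ n ih =>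
    intro j hj1 hjn B
    obtain ⟨hss, hcfg, hBsub, hxAm⟩ := stepA_step (g := g) hm0 hd0 hj1 (by omega) B
    set B' := newB (confA hm0 d j B) (stepA hm0 d j) with hB'
    obtain ⟨ihv, ihB, ihy⟩ := ih (j + 1) (by omega) (by omega) B'
    have hrun : runSched (confA hm0 d j B) (buildA hm0 d j (n + 1)) =
        runSched (confA hm0 d (j + 1) B') (buildA hm0 d (j + 1) n) := by
      show runSched (stepConfig (confA hm0 d j B) (stepA hm0 d j)) (buildA hm0 d (j + 1) n) = _
      rw [hcfg]
    refine ⟨⟨hss, ?_⟩, ?_, ?_⟩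
    · show schedValidFrom (ZI d m g) (stepConfig (confA hm0 d j B) (stepA hm0 d j))
        (buildA hm0 d (j + 1) n)
      rw [hcfg]
      exact ihv
    · rw [hrun]
      exact Finset.Subset.trans hBsub ihB
    · intro p i h1 h2
      rw [hrun]
      rcases eq_or_lt_of_le h1 with rfl | hgt
      · exact ihB (hxAm p)
      · exact ihy p i (by omega) (by omega)

end ZAux
end MBSP

namespace MBSP
namespace ZAux

open Finset

variable {d m : ℕ}

def schedA (hm0 : 0 < m) (d' : ℕ) : Schedule (ZNode d' m) 2 :=
  S0A hm0 d' :: stepA hm0 d' 0 :: buildA hm0 d' 1 (m - 1)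

lemma schedA_valid {g : ℝ} (hm2 : 2 ≤ m) (hd0 : 0 < d) :
    Valid (ZI d m g) (schedA (by omega) d) := by
  have hm0 : 0 < m := by omega
  set c0 : Config (ZNode d m) 2 := ⟨fun _ => ∅, B0f d m⟩ with hc0
  have hAL0 : ∀ p : Fin 2, afterLoad c0 (S0A hm0 d) p = HpF d m p := by
    intro p
    rw [afterLoad]
    have h1 : afterDel c0 (S0A hm0 d) p = ∅ := rfl
    rw [h1]
    have h2 : ((S0A hm0 d).load p).toFinset = HpF d m p := HpL_toFinset
    rw [h2, empty_union]
  have hss0 : ssValid (ZI d m g) c0 (S0A hm0 d) := by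
    refine ⟨?_, ?_, ?_, ?_, ?_⟩
    · intro p op hop; simp [S0A] at hop
    · intro p; trivial
    · intro p v hv; simp [S0A] at hv
    · intro p v hv
      exact mem_union_left _ (HpF_subset_B0f (by rw [← HpL_toFinset]; exact List.mem_toFinset.2 hv))
    · intro p
      rw [memOK_iff', hAL0 p, HpF_card]
      omega
  set B1 : Finset (ZNode d m) := newB c0 (S0A hm0 d) with hB1
  have hcfg0 : stepConfig c0 (S0A hm0 d) = ⟨fun p => HpF d m p, B1⟩ := by
    unfold stepConfig
    congr 1
    funext p
    exact hAL0 p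
  set c1 : Config (ZNode d m) 2 := ⟨fun p => HpF d m p, B1⟩ with hc1
  have hAC1 : ∀ p : Fin 2, afterComp c1 (stepA hm0 d 0) p =
      insert (xA hm0 p 0) (HpF d m p) := fun p => rfl
  have hdel1 : ∀ p : Fin 2, afterDel c1 (stepA hm0 d 0) p = HpF d m p := by
    intro p
    rw [afterDel, foldl_erase_eq]
    have hdl : ((stepA hm0 d 0).del p).toFinset = {xA hm0 p 0} := by
      simp [stepA]
    rw [hdl, hAC1 p]
    exact insert_sdiff_singleton' (yB_not_mem_HpF hm0)
  have hAL1 : ∀ p : Fin 2, afterLoad c1 (stepA hm0 d 0) p =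
      insert (xA hm0 (otherP p) 0) (HpF d m p) := by
    intro p
    rw [afterLoad, hdel1 p]
    have : ((stepA hm0 d 0).load p).toFinset = {xA hm0 (otherP p) 0} := by simp [stepA]
    rw [this]
    ext w; simp
  have hnewB1 : ∀ p : Fin 2, xA hm0 p 0 ∈ newB c1 (stepA hm0 d 0) := by
    intro p
    refine mem_union_right _ (mem_biUnion.2 ⟨p, mem_univ _, ?_⟩)
    simp [stepA]
  have hss1 : ssValid (ZI d m g) c1 (stepA hm0 d 0) := by
    refine ⟨?_, ?_, ?_, ?_, ?_⟩
    · intro p op hop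
      simp only [stepA, List.mem_singleton] at hop
      exact Or.inl ⟨_, hop⟩
    · intro p
      refine ⟨⟨xA_edge_exists hm0 hd0 p 0, ?_⟩, ?_, trivial⟩
      · intro w hw
        rcases xA_parents hm0 (by omega) w hw with hw' | ⟨h0, -⟩
        · exact hw'
        · omega
      · rw [memOK_iff']
        calc (insert (xA hm0 p 0) (c1.R p)).card ≤ (c1.R p).card + 1 := card_insert_le _ _
          _ ≤ d + 2 := by
              have : (c1.R p).card = d := HpF_card
              omega
    · intro p v hv
      simp only [stepA, List.mem_singleton] at hv
      rw [hv, hAC1 p]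
      exact mem_insert_self _ _
    · intro p v hv
      simp only [stepA, List.mem_singleton] at hv
      rw [hv]
      exact hnewB1 (otherP p)
    · intro p
      rw [memOK_iff', hAL1 p]
      have h1 : (insert (xA hm0 (otherP p) 0) (HpF d m p)).card ≤ (HpF d m p).card + 1 :=
        card_insert_le _ _
      have h2 : (HpF d m p).card = d := HpF_card
      omega
  set B2 : Finset (ZNode d m) := newB c1 (stepA hm0 d 0) with hB2
  have hcfg1 : stepConfig c1 (stepA hm0 d 0) = confA hm0 d 1 B2 := by
    unfold stepConfig confA
    congr 1
    funext p
    rw [hAL1 p]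
  obtain ⟨hbv, hbB, hby⟩ := buildA_valid (g := g) hm0 hd0 (m - 1) 1 (le_refl 1) (by omega) B2
  refine ⟨B0f d m, initB_B0f hd0, ⟨hss0, ?_⟩, ?_⟩
  · show schedValidFrom (ZI d m g) (stepConfig c0 (S0A hm0 d))
      (stepA hm0 d 0 :: buildA hm0 d 1 (m - 1))
    rw [hcfg0]
    refine ⟨hss1, ?_⟩
    show schedValidFrom (ZI d m g) (stepConfig c1 (stepA hm0 d 0)) (buildA hm0 d 1 (m - 1))
    rw [hcfg1]
    exact hbv
  · intro w hw
    have hrun : (runSched c0 (schedA hm0 d)).B =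
        (runSched (confA hm0 d 1 B2) (buildA hm0 d 1 (m - 1))).B := by
      show (runSched (stepConfig c0 (S0A hm0 d)) (stepA hm0 d 0 :: buildA hm0 d 1 (m - 1))).B = _
      rw [hcfg0]
      show (runSched (stepConfig c1 (stepA hm0 d 0)) (buildA hm0 d 1 (m - 1))).B = _
      rw [hcfg1]
    show w ∈ (runSched c0 (schedA hm0 d)).B
    rw [hrun]
    have hy : ∀ p : Fin 2, xA hm0 p (m - 1) ∈
        (runSched (confA hm0 d 1 B2) (buildA hm0 d 1 (m - 1))).B := by
      intro p
      exact hby p (m - 1) (by omega) (by omega)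
    rcases sink_char hd0 hm0 w hw with rfl | rfl
    · have hv0 : ZNode.v (⟨m - 1, by omega⟩ : Fin m) = yB (d := d) hm0 0 (m - 1) := by
        simp [yB, vnode, Fin.ext_iff, Nat.mod_eq_of_lt (by omega : m - 1 < m)]
      rcases Nat.mod_two_eq_zero_or_one (m - 1) with h2 | h2
      · have : yB (d := d) hm0 0 (m - 1) = xA hm0 1 (m - 1) := by
          simp [xA, letterA, otherP, h2]
        rw [hv0, this]; exact hy 1
      · have : yB (d := d) hm0 0 (m - 1) = xA hm0 0 (m - 1) := by
          simp [xA, letterA, otherP, h2]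
        rw [hv0, this]; exact hy 0
    · have hv0 : ZNode.u (⟨m - 1, by omega⟩ : Fin m) = yB (d := d) hm0 1 (m - 1) := by
        simp [yB, unode, Fin.ext_iff, Nat.mod_eq_of_lt (by omega : m - 1 < m)]
      rcases Nat.mod_two_eq_zero_or_one (m - 1) with h2 | h2
      · have : yB (d := d) hm0 1 (m - 1) = xA hm0 0 (m - 1) := by
          simp [xA, letterA, otherP, h2]
        rw [hv0, this]; exact hy 0
      · have : yB (d := d) hm0 1 (m - 1) = xA hm0 1 (m - 1) := by
          simp [xA, letterA, otherP, h2]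
        rw [hv0, this]; exact hy 1

lemma ciSup_const_of {ι : Sort*} [Nonempty ι] {f : ι → ℝ} {a : ℝ} (h : ∀ p, f p = a) :
    (⨆ p, f p) = a := by
  have : f = fun _ => a := funext h
  rw [this, ciSup_const]

lemma ssCost_stepA {g : ℝ} (hm0 : 0 < m) (j : ℕ) :
    ssCost (ZI d m g) (stepA hm0 d j) = 1 + g + g := by
  have e1 : (⨆ p : Fin (ZI d m g).P, listCost (ZI d m g) ((stepA hm0 d j).comp p)) = 1 :=
    @ciSup_const_of (Fin (ZI d m g).P) ⟨(0 : Fin 2)⟩ _ _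
      (fun p => by simp [stepA, listCost, opCost, zipper])
  have e2 : (⨆ p : Fin (ZI d m g).P, ioCost (ZI d m g) ((stepA hm0 d j).save p)) = g :=
    @ciSup_const_of (Fin (ZI d m g).P) ⟨(0 : Fin 2)⟩ _ _
      (fun p => by rw [ioCost_eq]; simp [stepA])
  have e3 : (⨆ p : Fin (ZI d m g).P, ioCost (ZI d m g) ((stepA hm0 d j).load p)) = g :=
    @ciSup_const_of (Fin (ZI d m g).P) ⟨(0 : Fin 2)⟩ _ _
      (fun p => by rw [ioCost_eq]; simp [stepA])
  show _ + _ + _ + (ZI d m g).L = _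
  rw [e1, e2, e3]
  show (1 : ℝ) + g + g + 0 = 1 + g + g
  ring

lemma ssCost_S0A {g : ℝ} (hm0 : 0 < m) :
    ssCost (ZI d m g) (S0A hm0 d) = d * g := by
  have e1 : (⨆ p : Fin (ZI d m g).P, listCost (ZI d m g) ((S0A hm0 d).comp p)) = 0 :=
    @ciSup_const_of (Fin (ZI d m g).P) ⟨(0 : Fin 2)⟩ _ _
      (fun p => by simp [S0A, listCost])
  have e2 : (⨆ p : Fin (ZI d m g).P, ioCost (ZI d m g) ((S0A hm0 d).save p)) = 0 :=
    @ciSup_const_of (Fin (ZI d m g).P) ⟨(0 : Fin 2)⟩ _ _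
      (fun p => by rw [ioCost_eq]; simp [S0A])
  have e3 : (⨆ p : Fin (ZI d m g).P, ioCost (ZI d m g) ((S0A hm0 d).load p)) = d * g :=
    @ciSup_const_of (Fin (ZI d m g).P) ⟨(0 : Fin 2)⟩ _ _
      (fun p => by rw [ioCost_eq]; rw [show ((S0A hm0 d).load p).length = d from HpL_length])
  show _ + _ + _ + (ZI d m g).L = _
  rw [e1, e2, e3]
  show (0 : ℝ) + 0 + (d : ℝ) * g + 0 = d * g
  ring

lemma syncCost_buildA {g : ℝ} (hm0 : 0 < m) :
    ∀ (n j : ℕ), syncCost (ZI d m g) (buildA hm0 d j n) = n * (1 + g + g) := by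
  intro n
  induction n with
  | zero => intro j; simp [syncCost, buildA]
  | succ n ih =>
    intro j
    show syncCost (ZI d m g) (stepA hm0 d j :: buildA hm0 d (j + 1) n) = _
    have : syncCost (ZI d m g) (stepA hm0 d j :: buildA hm0 d (j + 1) n) =
        ssCost (ZI d m g) (stepA hm0 d j) + syncCost (ZI d m g) (buildA hm0 d (j + 1) n) := by
      simp [syncCost]
    rw [this, ssCost_stepA, ih]
    push_cast
    ring

lemma syncCost_schedA {g : ℝ} (hm2 : 2 ≤ m) (hd0 : 0 < d) :
    syncCost (ZI d m g) (schedA (by omega) d) = d * g + m * (1 + g + g) := by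
  have hm0 : 0 < m := by omega
  show syncCost (ZI d m g) (S0A hm0 d :: stepA hm0 d 0 :: buildA hm0 d 1 (m - 1)) = _
  have h1 : syncCost (ZI d m g) (S0A hm0 d :: stepA hm0 d 0 :: buildA hm0 d 1 (m - 1)) =
      ssCost (ZI d m g) (S0A hm0 d) + (ssCost (ZI d m g) (stepA hm0 d 0) +
        syncCost (ZI d m g) (buildA hm0 d 1 (m - 1))) := by
    simp [syncCost]
  rw [h1, ssCost_S0A, ssCost_stepA, syncCost_buildA]
  have : ((m - 1 : ℕ) : ℝ) = (m : ℝ) - 1 := by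
    have : (1 : ℕ) ≤ m := hm0
    push_cast [Nat.cast_sub this]
    ring
  rw [this]
  ring

lemma syncCost_nonneg {g : ℝ} (hg : 0 ≤ g) (sched : Schedule (ZNode d m) 2) :
    0 ≤ syncCost (ZI d m g) sched :=
  le_trans (by positivity) (syncCost_ge_loads hg sched)

end ZAux
end MBSP

namespace MBSP
/-- For `d ≥ 5`, `m ≥ d`, `g ≥ 1`, on the zipper DAG `Z(d,m)` with
`P = 2`, `r = d+2`, `L = 0`: the minimum synchronous cost `OPT'` over valid schedules
that compute every `v_i` on processor 1 and every `u_i` on processor 2 satisfies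
`OPT' ≥ (d/10) · OPT`, where `OPT` is the unrestricted optimum. -/
theorem statement_0 (d m : ℕ) (hd : 5 ≤ d) (hm : d ≤ m) (g : ℝ) (hg : 1 ≤ g) :
    ((d : ℝ) / 10) *
      sInf {c : ℝ | ∃ sched : Schedule (ZNode d m) 2,
        Valid (zipper d m ((d : ℝ) + 2) g 0) sched ∧
        syncCost (zipper d m ((d : ℝ) + 2) g 0) sched = c}
    ≤
    sInf {c : ℝ | ∃ sched : Schedule (ZNode d m) 2,
        Valid (zipper d m ((d : ℝ) + 2) g 0) sched ∧
        (∀ S ∈ sched, ∀ p : Fin 2, ∀ i : Fin m,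
          Op.compute (ZNode.v i) ∈ S.comp p → p = 0) ∧
        (∀ S ∈ sched, ∀ p : Fin 2, ∀ i : Fin m,
          Op.compute (ZNode.u i) ∈ S.comp p → p = 1) ∧
        syncCost (zipper d m ((d : ℝ) + 2) g 0) sched = c} := by
  have hd0 : 0 < d := by omega
  have hm2 : (2 : ℕ) ≤ m := by omega
  have hg0 : (0 : ℝ) ≤ g := le_trans zero_le_one hg
  set U : Set ℝ := {c : ℝ | ∃ sched : Schedule (ZNode d m) 2,
      Valid (zipper d m ((d : ℝ) + 2) g 0) sched ∧
      syncCost (zipper d m ((d : ℝ) + 2) g 0) sched = c} with hU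
  set R : Set ℝ := {c : ℝ | ∃ sched : Schedule (ZNode d m) 2,
      Valid (zipper d m ((d : ℝ) + 2) g 0) sched ∧
      (∀ S ∈ sched, ∀ p : Fin 2, ∀ i : Fin m,
        Op.compute (ZNode.v i) ∈ S.comp p → p = 0) ∧
      (∀ S ∈ sched, ∀ p : Fin 2, ∀ i : Fin m,
        Op.compute (ZNode.u i) ∈ S.comp p → p = 1) ∧
      syncCost (zipper d m ((d : ℝ) + 2) g 0) sched = c} with hR
  -- upper bound for the unrestricted optimum
  have hmemU : ((d : ℝ) * g + (m : ℝ) * (1 + g + g)) ∈ U :=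
    ⟨ZAux.schedA (by omega) d, ZAux.schedA_valid hm2 hd0, ZAux.syncCost_schedA hm2 hd0⟩
  have hbddU : BddBelow U := by
    refine ⟨0, fun c hc => ?_⟩
    obtain ⟨sched, _, hcost⟩ := hc
    rw [← hcost]
    exact ZAux.syncCost_nonneg hg0 sched
  have hinfU : sInf U ≤ (d : ℝ) * g + (m : ℝ) * (1 + g + g) := csInf_le hbddU hmemU
  -- lower bound for the restricted optimum
  obtain ⟨schedR, hRvalid, hR0, hR1⟩ := ZAux.exists_restricted (g := g) hm2 hd0
  have hmemR : syncCost (zipper d m ((d : ℝ) + 2) g 0) schedR ∈ R :=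
    ⟨schedR, hRvalid, hR0, hR1, rfl⟩
  have hinfR : ((m : ℝ) * d - d - 1) * g ≤ sInf R := by
    refine le_csInf ⟨_, hmemR⟩ ?_
    rintro c ⟨sched, hv, h0, h1, rfl⟩
    exact ZAux.restricted_LB (by omega) (by omega) hg0 sched hv h0 h1
  -- arithmetic
  have hd5 : (5 : ℝ) ≤ (d : ℝ) := by exact_mod_cast hd
  have hdm : (d : ℝ) ≤ (m : ℝ) := by exact_mod_cast hm
  have hm5 : (5 : ℝ) ≤ (m : ℝ) := le_trans hd5 hdm
  have hd0' : (0 : ℝ) ≤ (d : ℝ) := by positivity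
  have hm0' : (0 : ℝ) ≤ (m : ℝ) := by positivity
  have hA : (0 : ℝ) ≤ (d : ℝ) * g * ((m : ℝ) - d) :=
    mul_nonneg (mul_nonneg hd0' hg0) (by linarith)
  have hB : (0 : ℝ) ≤ (d : ℝ) * m * (g - 1) :=
    mul_nonneg (mul_nonneg hd0' hm0') (by linarith)
  have hC : (0 : ℝ) ≤ (d : ℝ) * g * ((m : ℝ) - 5) :=
    mul_nonneg (mul_nonneg hd0' hg0) (by linarith)
  have hD : (0 : ℝ) ≤ g * (2 * (d : ℝ) - 1) :=
    mul_nonneg hg0 (by linarith)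
  have harith : ((d : ℝ) / 10) * ((d : ℝ) * g + (m : ℝ) * (1 + g + g)) ≤
      ((m : ℝ) * d - d - 1) * g := by nlinarith [hA, hB, hC, hD]
  calc ((d : ℝ) / 10) * sInf U
      ≤ ((d : ℝ) / 10) * ((d : ℝ) * g + (m : ℝ) * (1 + g + g)) :=
        mul_le_mul_of_nonneg_left hinfU (by positivity)
    _ ≤ ((m : ℝ) * d - d - 1) * g := harith
    _ ≤ sInf R := hinfR

end MBSP
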